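/- arXiv:2011.12511 — 5 statements merged into one kernel-verified Lean document; each statement's English description precedes it below -/
import Mathlib

section
/- Let E be a finite-dimensional real inner product space, let L : E → ℝ be differentiable and ρ-smooth for some ρ > 0, and let λ > ρ. For w ∈ E let w̃*(w) denote the unique minimizer of w̃ ↦ L(w̃) + (λ/2)‖w̃ − w‖², and define the envelope e : E → ℝ by e(w) = inf_{w̃ ∈ E} [L(w̃) + (λ/2)‖w̃ − w‖²]. Then e is differentiable and ∇e(w) = λ(w − w̃*(w)) for every w ∈ E. -/
open InnerProductSpace Set Filter Asymptotics
open scoped RealInnerProductSpace Gradient Topology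

/-- Descent lemma (lower form) for a function with Lipschitz gradient. -/
lemma aux_descent {E : Type*} [NormedAddCommGroup E] [InnerProductSpace ℝ E]
    [FiniteDimensional ℝ E]
    (L : E → ℝ) (ρ : ℝ) (hρ : 0 < ρ) (hdiff : Differentiable ℝ L)
    (hsmooth : ∀ x y : E, ‖gradient L x - gradient L y‖ ≤ ρ * ‖x - y‖)
    (x y : E) :
    L x + ⟪gradient L x, y - x⟫_ℝ - ρ / 2 * ‖y - x‖ ^ 2 ≤ L y := by
  set v : E := y - x with hv
  set c : ℝ := ⟪gradient L x, v⟫_ℝ with hc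
  have hL' : ∀ p : E, HasFDerivAt L (InnerProductSpace.toDual ℝ E (gradient L p)) p :=
    fun p => hasGradientAt_iff_hasFDerivAt.mp (hdiff p).hasGradientAt
  set φ : ℝ → ℝ := fun t => L (x + t • v) - t * c + ρ * ‖v‖ ^ 2 / 2 * t ^ 2 with hφdef
  have hφ : ∀ t : ℝ, HasDerivAt φ
      (⟪gradient L (x + t • v), v⟫_ℝ - c + ρ * ‖v‖ ^ 2 * t) t := by
    intro t
    have hline : HasDerivAt (fun t : ℝ => x + t • v) v t := by
      simpa using ((hasDerivAt_id t).smul_const v).const_add x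
    have hcomp : HasDerivAt (fun t : ℝ => L (x + t • v)) ⟪gradient L (x + t • v), v⟫_ℝ t := by
      simpa [InnerProductSpace.toDual_apply_apply, Function.comp_def] using
        (hL' (x + t • v)).comp_hasDerivAt t hline
    have h2 : HasDerivAt (fun t : ℝ => t * c) c t := hasDerivAt_mul_const c
    have h3 : HasDerivAt (fun t : ℝ => ρ * ‖v‖ ^ 2 / 2 * t ^ 2)
        (ρ * ‖v‖ ^ 2 / 2 * (2 * t)) t := by
      simpa using (hasDerivAt_pow 2 t).const_mul (ρ * ‖v‖ ^ 2 / 2)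
    have := (hcomp.sub h2).add h3
    exact this.congr_deriv (by ring)
  have hmono : MonotoneOn φ (Icc (0 : ℝ) 1) := by
    apply monotoneOn_of_deriv_nonneg (convex_Icc 0 1)
    · exact fun t _ => ((hφ t).continuousAt).continuousWithinAt
    · exact fun t _ => ((hφ t).differentiableAt).differentiableWithinAt
    · intro t ht
      rw [interior_Icc] at ht
      rw [(hφ t).deriv]
      have h1 : ⟪gradient L x, v⟫_ℝ - ⟪gradient L (x + t • v), v⟫_ℝ
          = ⟪gradient L x - gradient L (x + t • v), v⟫_ℝ := (inner_sub_left _ _ _).symm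
      have h2 : |⟪gradient L x - gradient L (x + t • v), v⟫_ℝ|
          ≤ ‖gradient L x - gradient L (x + t • v)‖ * ‖v‖ := abs_real_inner_le_norm _ _
      have h3 : ‖gradient L x - gradient L (x + t • v)‖ ≤ ρ * (t * ‖v‖) := by
        have := hsmooth x (x + t • v)
        have hn : ‖x - (x + t • v)‖ = t * ‖v‖ := by
          rw [show x - (x + t • v) = -(t • v) by abel, norm_neg, norm_smul,
            Real.norm_eq_abs, abs_of_pos ht.1]
        rwa [hn] at this
      have h4 : ⟪gradient L x - gradient L (x + t • v), v⟫_ℝ ≤ ρ * (t * ‖v‖) * ‖v‖ :=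
        le_trans (le_abs_self _) (le_trans h2 (by nlinarith [norm_nonneg v]))
      have h5 : ⟪gradient L x, v⟫_ℝ - ⟪gradient L (x + t • v), v⟫_ℝ ≤ ρ * ‖v‖ ^ 2 * t := by
        rw [h1]; nlinarith [h4]
      linarith [h5, hc]
  have h01 : φ 0 ≤ φ 1 := hmono (by simp) (by simp) zero_le_one
  have hφ0 : φ 0 = L x := by simp [hφdef]
  have hφ1 : φ 1 = L y - c + ρ * ‖v‖ ^ 2 / 2 := by
    have hxy : x + (1 : ℝ) • v = y := by rw [one_smul, hv]; abel
    simp only [hφdef, hxy, one_pow, mul_one, one_mul]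
  rw [hφ0, hφ1] at h01
  have : ρ / 2 * ‖y - x‖ ^ 2 = ρ * ‖v‖ ^ 2 / 2 := by rw [hv]; ring
  linarith

set_option maxHeartbeats 1000000 in
/-- The Moreau-type envelope `e(w) = inf_{w̃} [L(w̃) + (λ/2)‖w̃ − w‖²]` of a differentiable
`ρ`-smooth function `L` with `λ > ρ` is differentiable with `∇e(w) = λ(w − w̃*(w))`,
where `w̃*(w)` is the (unique) minimizer of `w̃ ↦ L(w̃) + (λ/2)‖w̃ − w‖²`. -/
theorem stmt_3 {E : Type*} [NormedAddCommGroup E] [InnerProductSpace ℝ E]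
    [FiniteDimensional ℝ E]
    (L : E → ℝ) (ρ lam : ℝ) (hρ : 0 < ρ)
    (hdiff : Differentiable ℝ L)
    (hsmooth : ∀ x y : E, ‖gradient L x - gradient L y‖ ≤ ρ * ‖x - y‖)
    (hlam : ρ < lam)
    (wstar : E → E)
    (hwstar : ∀ w : E, IsMinOn (fun w' : E => L w' + lam / 2 * ‖w' - w‖ ^ 2) Set.univ (wstar w))
    (e : E → ℝ)
    (he : ∀ w : E, e w = ⨅ w' : E, (L w' + lam / 2 * ‖w' - w‖ ^ 2)) :
    Differentiable ℝ e ∧ ∀ w : E, gradient e w = lam • (w - wstar w) := by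
  have hlam0 : 0 < lam := hρ.trans hlam
  -- e is the attained minimum
  have hek : ∀ u : E, e u = L (wstar u) + lam / 2 * ‖wstar u - u‖ ^ 2 := by
    intro u
    rw [he u]
    apply le_antisymm
    · exact ciInf_le ⟨L (wstar u) + lam / 2 * ‖wstar u - u‖ ^ 2,
        forall_mem_range.mpr fun w' => hwstar u (mem_univ w')⟩ (wstar u)
    · exact le_ciInf fun w' => hwstar u (mem_univ w')
  -- e u is at most the value at any point
  have hele : ∀ u w' : E, e u ≤ L w' + lam / 2 * ‖w' - u‖ ^ 2 := by
    intro u w'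
    rw [hek u]
    exact hwstar u (mem_univ w')
  -- stationarity: gradient of L at wstar w equals lam • (w - wstar w)
  have hstat : ∀ w : E, gradient L (wstar w) = lam • (w - wstar w) := by
    intro w
    set x := wstar w with hx
    -- quadratic has gradient
    have hquad : HasGradientAt (fun u : E => lam / 2 * ‖u - w‖ ^ 2) (lam • (x - w)) x := by
      rw [hasGradientAt_iff_isLittleO]
      have key : ∀ u : E, lam / 2 * ‖u - w‖ ^ 2 - lam / 2 * ‖x - w‖ ^ 2
          - ⟪lam • (x - w), u - x⟫_ℝ = lam / 2 * ‖u - x‖ ^ 2 := by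
        intro u
        have hexp : ‖u - w‖ ^ 2 = ‖u - x‖ ^ 2 + 2 * ⟪u - x, x - w⟫_ℝ + ‖x - w‖ ^ 2 := by
          rw [show u - w = (u - x) + (x - w) by abel]
          exact norm_add_sq_real _ _
        rw [real_inner_smul_left, real_inner_comm]
        rw [hexp]; ring
      have : (fun u : E => lam / 2 * ‖u - w‖ ^ 2 - lam / 2 * ‖x - w‖ ^ 2
          - ⟪lam • (x - w), u - x⟫_ℝ) = fun u => lam / 2 * ‖u - x‖ ^ 2 := funext key
      rw [this]
      exact ((isLittleO_pow_sub_sub x (m := 2) one_lt_two).const_mul_left (lam / 2))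
    have hLg : HasGradientAt L (gradient L x) x := (hdiff x).hasGradientAt
    have hsum : HasFDerivAt (fun u : E => L u + lam / 2 * ‖u - w‖ ^ 2)
        (InnerProductSpace.toDual ℝ E (gradient L x + lam • (x - w))) x := by
      have h1 := hasGradientAt_iff_hasFDerivAt.mp hLg
      have h2 := hasGradientAt_iff_hasFDerivAt.mp hquad
      have := h1.add h2
      rwa [← map_add] at this
    have hmin : IsLocalMin (fun u : E => L u + lam / 2 * ‖u - w‖ ^ 2) x :=
      (hwstar w).isLocalMin Filter.univ_mem
    have hzero := hmin.hasFDerivAt_eq_zero hsum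
    have hz : gradient L x + lam • (x - w) = 0 :=
      (InnerProductSpace.toDual ℝ E).map_eq_zero_iff.mp (by rw [hzero])
    have : gradient L x = -(lam • (x - w)) := eq_neg_of_add_eq_zero_left hz
    rw [this, ← smul_neg, neg_sub]
  -- strong minimality
  have hstrong : ∀ w w' : E, L (wstar w) + lam / 2 * ‖wstar w - w‖ ^ 2
      + (lam - ρ) / 2 * ‖w' - wstar w‖ ^ 2 ≤ L w' + lam / 2 * ‖w' - w‖ ^ 2 := by
    intro w w'
    set x := wstar w with hx
    have hd := aux_descent L ρ hρ hdiff hsmooth x w'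
    rw [hstat w, ← hx, real_inner_smul_left] at hd
    have hexp : ‖w' - w‖ ^ 2 = ‖w' - x‖ ^ 2 + 2 * ⟪w' - x, x - w⟫_ℝ + ‖x - w‖ ^ 2 := by
      rw [show w' - w = (w' - x) + (x - w) by abel]
      exact norm_add_sq_real _ _
    have hcross : ⟪w - x, w' - x⟫_ℝ + ⟪w' - x, x - w⟫_ℝ = 0 := by
      rw [real_inner_comm (w' - x) (w - x), ← inner_add_right,
        show (w - x) + (x - w) = (0 : E) by abel, inner_zero_right]
    nlinarith [hd, hexp, hcross]
  -- the gradient of e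
  have hgrad : ∀ w : E, HasGradientAt e (lam • (w - wstar w)) w := by
    intro w
    set x := wstar w with hx
    rw [hasGradientAt_iff_isLittleO]
    have hbound : ∀ u : E, |e u - e w - ⟪lam • (w - x), u - w⟫_ℝ|
        ≤ (lam ^ 2 / (lam - ρ)) * ‖u - w‖ ^ 2 := by
      intro u
      set y := wstar u with hy
      have hin : ⟪lam • (w - x), u - w⟫_ℝ = lam * ⟪w - x, u - w⟫_ℝ := real_inner_smul_left _ _ _
      -- upper bound
      have hup : e u - e w - lam * ⟪w - x, u - w⟫_ℝ ≤ lam / 2 * ‖u - w‖ ^ 2 := by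
        have h1 := hele u x
        have h2 := hek w
        have hexp : ‖x - u‖ ^ 2 = ‖x - w‖ ^ 2 + 2 * ⟪x - w, w - u⟫_ℝ + ‖w - u‖ ^ 2 := by
          rw [show x - u = (x - w) + (w - u) by abel]
          exact norm_add_sq_real _ _
        have hc : ⟪x - w, w - u⟫_ℝ = ⟪w - x, u - w⟫_ℝ := by
          rw [show x - w = -(w - x) by abel, show w - u = -(u - w) by abel,
            inner_neg_neg]
        have hn : ‖u - w‖ = ‖w - u‖ := by rw [← norm_neg]; congr 1; abel
        rw [hn]
        nlinarith [h1, h2, hexp, hc]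
      -- lower bound
      have hlow : -(lam ^ 2 / (lam - ρ)) * ‖u - w‖ ^ 2
          ≤ e u - e w - lam * ⟪w - x, u - w⟫_ℝ := by
        have h1 := hstrong w y
        have h2 := hek u
        have h3 := hek w
        have hexp : ‖y - u‖ ^ 2 = ‖y - w‖ ^ 2 + 2 * ⟪y - w, w - u⟫_ℝ + ‖w - u‖ ^ 2 := by
          rw [show y - u = (y - w) + (w - u) by abel]
          exact norm_add_sq_real _ _
        have hsplit : ⟪y - w, w - u⟫_ℝ = ⟪y - x, w - u⟫_ℝ + ⟪w - x, u - w⟫_ℝ := by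
          rw [show y - w = (y - x) + (x - w) by abel, inner_add_left]
          congr 1
          rw [show x - w = -(w - x) by abel, show w - u = -(u - w) by abel, inner_neg_neg]
        have hCS : -(‖y - x‖ * ‖w - u‖) ≤ ⟪y - x, w - u⟫_ℝ :=
          neg_le_of_neg_le (by
            have := abs_real_inner_le_norm (y - x) (w - u)
            nlinarith [abs_nonneg (⟪y - x, w - u⟫_ℝ), neg_abs_le (⟪y - x, w - u⟫_ℝ)])
        have hn : ‖u - w‖ = ‖w - u‖ := by rw [← norm_neg]; congr 1; abel
        set t := ‖y - x‖
        set s := ‖w - u‖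
        have hts : 0 ≤ t := norm_nonneg _
        have hss : 0 ≤ s := norm_nonneg _
        have hlρ : 0 < lam - ρ := by linarith
        -- e u - e w - lam * inner ≥ (lam-ρ)/2 t² + lam * ⟪y-x,w-u⟫ + lam/2 s²
        have key : e u - e w - lam * ⟪w - x, u - w⟫_ℝ
            ≥ (lam - ρ) / 2 * t ^ 2 - lam * (t * s) + lam / 2 * s ^ 2 := by
          have hge : lam * ⟪y - x, w - u⟫_ℝ ≥ - (lam * (t * s)) := by
            nlinarith [hCS, hlam0.le]
          nlinarith [h1, h2, h3, hexp, hsplit, hge]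
        have quad : -(lam ^ 2 / (lam - ρ)) * s ^ 2
            ≤ (lam - ρ) / 2 * t ^ 2 - lam * (t * s) + lam / 2 * s ^ 2 := by
          have h := sq_nonneg ((lam - ρ) * t - lam * s)
          have hkey : (lam * (t * s) - (lam - ρ) / 2 * t ^ 2 - lam / 2 * s ^ 2) * (lam - ρ)
              ≤ lam ^ 2 * s ^ 2 := by
            nlinarith [h, mul_nonneg (mul_nonneg hlam0.le hlρ.le) (sq_nonneg s),
              mul_nonneg (mul_nonneg hlam0.le hlam0.le) (sq_nonneg s)]
          have h2 := (le_div_iff₀ hlρ).mpr hkey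
          have heq : lam ^ 2 * s ^ 2 / (lam - ρ) = lam ^ 2 / (lam - ρ) * s ^ 2 := by ring
          linarith [h2, heq.le, heq.ge]
        rw [hn]
        linarith [key, quad]
      rw [hin]
      rw [abs_le]
      constructor
      · linarith [hlow]
      · have : lam / 2 * ‖u - w‖ ^ 2 ≤ lam ^ 2 / (lam - ρ) * ‖u - w‖ ^ 2 := by
          have hlρ : 0 < lam - ρ := by linarith
          have : lam / 2 ≤ lam ^ 2 / (lam - ρ) := by
            rw [div_le_div_iff₀ two_pos hlρ]
            nlinarith
          nlinarith [sq_nonneg ‖u - w‖, this]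
        linarith [hup]
    have hO : (fun u : E => e u - e w - ⟪lam • (w - x), u - w⟫_ℝ)
        =O[𝓝 w] fun u => ‖u - w‖ ^ 2 := by
      apply IsBigO.of_bound (lam ^ 2 / (lam - ρ))
      filter_upwards with u
      rw [Real.norm_eq_abs, Real.norm_eq_abs, abs_pow, abs_norm]
      exact hbound u
    exact hO.trans_isLittleO (isLittleO_pow_sub_sub w (m := 2) one_lt_two)
  exact ⟨fun w => (hgrad w).differentiableAt, fun w => (hgrad w).gradient⟩
end

section
/- Let E be a finite-dimensional real inner product space and X ⊆ E a nonempty convex set. Let h : E → ℝ be differentiable and convex, and for x, z ∈ E define the Bregman divergence V(x, z) = h(z) − h(x) − ⟪∇h(x), z − x⟫. Let p : E → ℝ be convex, let μ₁, μ₂ ≥ 0, let x̃, ỹ ∈ X, and suppose u* ∈ X minimizes u ↦ p(u) + μ₁V(x̃, u) + μ₂V(ỹ, u) over X. Then for every u ∈ X: p(u*) + μ₁V(x̃, u*) + μ₂V(ỹ, u*) ≤ p(u) + μ₁V(x̃, u) + μ₂V(ỹ, u) − (μ₁ + μ₂)V(u*, u). -/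
open RealInnerProductSpace

/-- Three-point lemma for Bregman divergences (Ghadimi–Lan): if `u*` minimizes
`u ↦ p(u) + μ₁V(x̃,u) + μ₂V(ỹ,u)` over a nonempty convex set `X`, where
`V(x,z) = h(z) − h(x) − ⟪∇h(x), z − x⟫` is the Bregman divergence of a differentiable convex
`h` and `p` is convex, then for all `u ∈ X`,
`p(u*) + μ₁V(x̃,u*) + μ₂V(ỹ,u*) ≤ p(u) + μ₁V(x̃,u) + μ₂V(ỹ,u) − (μ₁+μ₂)V(u*,u)`. -/
theorem stmt_8 {E : Type*} [NormedAddCommGroup E] [InnerProductSpace ℝ E]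
    [FiniteDimensional ℝ E]
    (X : Set E) (hXne : X.Nonempty) (hXconv : Convex ℝ X)
    (h : E → ℝ) (hdiff : Differentiable ℝ h) (hconv : ConvexOn ℝ Set.univ h)
    (V : E → E → ℝ)
    (hV : ∀ x z : E, V x z = h z - h x - ⟪gradient h x, z - x⟫)
    (p : E → ℝ) (hp : ConvexOn ℝ X p)
    (μ₁ μ₂ : ℝ) (hμ₁ : 0 ≤ μ₁) (hμ₂ : 0 ≤ μ₂)
    (xt yt : E) (hxt : xt ∈ X) (hyt : yt ∈ X)
    (ustar : E) (hustar : ustar ∈ X)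
    (hmin : IsMinOn (fun u : E => p u + μ₁ * V xt u + μ₂ * V yt u) X ustar) :
    ∀ u ∈ X,
      p ustar + μ₁ * V xt ustar + μ₂ * V yt ustar ≤
        p u + μ₁ * V xt u + μ₂ * V yt u - (μ₁ + μ₂) * V ustar u := by
  intro u hu
  set w : E := μ₁ • gradient h xt + μ₂ • gradient h yt with hw
  set C : ℝ := μ₁ * (- h xt + ⟪gradient h xt, xt⟫) + μ₂ * (- h yt + ⟪gradient h yt, yt⟫)
    with hC
  -- affine decomposition of the weighted Bregman terms
  have hA : ∀ z : E, μ₁ * V xt z + μ₂ * V yt z = (μ₁ + μ₂) * h z + (C - ⟪w, z⟫) := by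
    intro z
    simp only [hV, hw, hC, inner_sub_right, inner_add_left, inner_smul_left,
      RCLike.conj_to_real]
    ring
  set v : E := u - ustar with hv
  -- derivative of t ↦ h (ustar + t • v) at 0
  have hline : HasDerivAt (fun t : ℝ => ustar + t • v) v 0 := by
    simpa using ((hasDerivAt_id (0:ℝ)).smul_const v).const_add ustar
  have hF : HasFDerivAt h ((InnerProductSpace.toDual ℝ E) (gradient h ustar))
      (ustar + (0:ℝ) • v) := by
    rw [show ustar + (0:ℝ) • v = ustar by simp]
    exact (hdiff ustar).hasGradientAt.hasFDerivAt
  have hD : HasDerivAt (fun t : ℝ => h (ustar + t • v)) ⟪gradient h ustar, v⟫ 0 := by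
    simpa [Function.comp_def] using hF.comp_hasDerivAt 0 hline
  -- key inequality for t ∈ (0,1]
  have key : ∀ t : ℝ, t ∈ Set.Ioc (0:ℝ) 1 →
      (p ustar + (C - ⟪w, ustar⟫)) - (p u + (C - ⟪w, u⟫)) ≤
        (μ₁ + μ₂) * ((h (ustar + t • v) - h ustar) / t) := by
    intro t ht
    obtain ⟨ht0, ht1⟩ := ht
    have heq : (1 - t) • ustar + t • u = ustar + t • v := by
      simp [hv, smul_sub, sub_smul, one_smul]; abel
    have hmem : ustar + t • v ∈ X :=
      heq ▸ hXconv hustar hu (by linarith : (0:ℝ) ≤ 1 - t) ht0.le (by ring)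
    have hmin' := hmin hmem
    simp only [Set.mem_setOf_eq] at hmin'
    have hpconv : p (ustar + t • v) ≤ (1 - t) * p ustar + t * p u := by
      have := hp.2 hustar hu (by linarith : (0:ℝ) ≤ 1 - t) ht0.le (by ring)
      rw [heq] at this
      simpa [smul_eq_mul] using this
    have hAu : ⟪w, ustar + t • v⟫ = (1 - t) * ⟪w, ustar⟫ + t * ⟪w, u⟫ := by
      rw [← heq, inner_add_right, inner_smul_right, inner_smul_right]
    have h2 : p ustar + (μ₁ + μ₂) * h ustar + (C - ⟪w, ustar⟫) ≤
        (1 - t) * p ustar + t * p u + (μ₁ + μ₂) * h (ustar + t • v) +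
          (C - ((1 - t) * ⟪w, ustar⟫ + t * ⟪w, u⟫)) := by
      have e1 := hA ustar
      have e2 := hA (ustar + t • v)
      rw [← hAu]
      linarith [hmin', hpconv, e1, e2]
    rw [← mul_div_assoc, le_div_iff₀ ht0]
    nlinarith [h2]
  -- take the limit t → 0+
  have hslope : Filter.Tendsto (fun t : ℝ =>
      (μ₁ + μ₂) * ((h (ustar + t • v) - h ustar) / t))
      (nhdsWithin 0 (Set.Ioi 0)) (nhds ((μ₁ + μ₂) * ⟪gradient h ustar, v⟫)) := by
    have h1 := hasDerivAt_iff_tendsto_slope.mp hD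
    have h2 : Filter.Tendsto (slope (fun t : ℝ => h (ustar + t • v)) 0)
        (nhdsWithin 0 (Set.Ioi 0)) (nhds ⟪gradient h ustar, v⟫) :=
      h1.mono_left (nhdsWithin_mono _ (fun x hx => Set.mem_compl_singleton_iff.mpr
        (ne_of_gt hx)))
    refine (h2.const_mul (μ₁ + μ₂)).congr (fun t => ?_)
    simp [slope_def_field]
  have hlim : (p ustar + (C - ⟪w, ustar⟫)) - (p u + (C - ⟪w, u⟫)) ≤
      (μ₁ + μ₂) * ⟪gradient h ustar, v⟫ := by
    refine ge_of_tendsto hslope ?_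
    filter_upwards [Ioc_mem_nhdsGT_of_mem (by norm_num : (0:ℝ) ∈ Set.Ico (0:ℝ) 1)]
      with t ht using key t ht
  -- conclude
  have hVu : V ustar u = h u - h ustar - ⟪gradient h ustar, v⟫ := by rw [hV]
  have e1 := hA ustar
  have e2 := hA u
  rw [hVu] at *
  nlinarith [hlim, e1, e2]
end

section
/- Let E be a finite-dimensional real inner product space, let H : E → ℝ be convex, let G′, δ, w^pr ∈ E, set g = G′ + δ, and let 0 < β ≤ 1. Let w^ag = prox_{βH}(w^pr − βg), i.e., the unique minimizer of u ↦ H(u) + (1/(2β))‖u − (w^pr − βg)‖². Then for every w ∈ E: ⟪G′, w^ag − w⟫ ≤ H(w) − H(w^ag) + (1/(2β))(‖w^pr − w‖² − ‖w^ag − w^pr‖²) + (1/2)‖δ‖². -/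
open RealInnerProductSpace

set_option maxHeartbeats 1000000 in
/-- Bound on the aggregated proximal step (second half of Lemma on proximal updates): with
`g = G′ + δ`, `0 < β ≤ 1`, and `w^ag = prox_{βH}(w^pr − βg)` for convex `H`, every `w` satisfies
`⟪G′, w^ag − w⟫ ≤ H(w) − H(w^ag) + (1/(2β))(‖w^pr − w‖² − ‖w^ag − w^pr‖²) + (1/2)‖δ‖²`. -/
theorem stmt_10 {E : Type*} [NormedAddCommGroup E] [InnerProductSpace ℝ E]
    [FiniteDimensional ℝ E]
    (H : E → ℝ) (hH : ConvexOn ℝ Set.univ H)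
    (G' δ wpr : E) (β : ℝ) (hβ0 : 0 < β) (hβ1 : β ≤ 1)
    (wag : E)
    (hwag : IsMinOn
      (fun u : E => H u + 1 / (2 * β) * ‖u - (wpr - β • (G' + δ))‖ ^ 2) Set.univ wag) :
    ∀ w : E, ⟪G', wag - w⟫ ≤
      H w - H wag + 1 / (2 * β) * (‖wpr - w‖ ^ 2 - ‖wag - wpr‖ ^ 2) + 1 / 2 * ‖δ‖ ^ 2 := by
  intro w
  set g : E := G' + δ with hg
  set v : E := wpr - β • g with hv
  set c : ℝ := 1 / (2 * β) with hc
  have hc0 : 0 < c := by positivity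
  set F : E → ℝ := fun u => H u + c * ‖u - v‖ ^ 2 with hF
  -- norm identity for convex combinations
  have hid : ∀ (t : ℝ) (a b : E), 0 ≤ t → t ≤ 1 →
      ‖(1 - t) • a + t • b‖ ^ 2
        = (1 - t) * ‖a‖ ^ 2 + t * ‖b‖ ^ 2 - t * (1 - t) * ‖b - a‖ ^ 2 := by
    intro t a b ht0 ht1
    have h1 : ‖(1 - t) • a + t • b‖ ^ 2
        = ‖(1 - t) • a‖ ^ 2 + 2 * ⟪(1 - t) • a, t • b⟫ + ‖t • b‖ ^ 2 :=
      norm_add_sq_real _ _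
    have h2 : ‖b - a‖ ^ 2 = ‖b‖ ^ 2 - 2 * ⟪b, a⟫ + ‖a‖ ^ 2 := norm_sub_sq_real _ _
    have h3 : ⟪(1 - t) • a, t • b⟫ = (1 - t) * t * ⟪b, a⟫ := by
      rw [real_inner_smul_left, real_inner_smul_right, real_inner_comm]; ring
    have h4 : ‖(1 - t) • a‖ ^ 2 = (1 - t) ^ 2 * ‖a‖ ^ 2 := by
      rw [norm_smul, Real.norm_eq_abs, abs_of_nonneg (by linarith), mul_pow]
    have h5 : ‖t • b‖ ^ 2 = t ^ 2 * ‖b‖ ^ 2 := by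
      rw [norm_smul, Real.norm_eq_abs, abs_of_nonneg ht0, mul_pow]
    rw [h1, h3, h4, h5, h2]; ring
  -- key strong-minimality inequality
  have hkey : ∀ t : ℝ, 0 < t → t < 1 → c * (1 - t) * ‖w - wag‖ ^ 2 ≤ F w - F wag := by
    intro t ht0 ht1
    have hmin := hwag (Set.mem_univ ((1 - t) • wag + t • w))
    have hconv := hH.2 (Set.mem_univ wag) (Set.mem_univ w)
      (by linarith : (0:ℝ) ≤ 1 - t) ht0.le (by ring)
    have heq : ((1 - t) • wag + t • w) - v = (1 - t) • (wag - v) + t • (w - v) := by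
      module
    have hnorm : ‖((1 - t) • wag + t • w) - v‖ ^ 2
        = (1 - t) * ‖wag - v‖ ^ 2 + t * ‖w - v‖ ^ 2 - t * (1 - t) * ‖w - wag‖ ^ 2 := by
      rw [heq, hid t _ _ ht0.le ht1.le]
      congr 3
      abel
    simp only [hF, Set.mem_setOf_eq] at hmin
    have : H wag + c * ‖wag - v‖ ^ 2 ≤
        ((1 - t) * H wag + t * H w) + c * ‖((1 - t) • wag + t • w) - v‖ ^ 2 := by
      calc H wag + c * ‖wag - v‖ ^ 2
          ≤ H ((1 - t) • wag + t • w) + c * ‖((1 - t) • wag + t • w) - v‖ ^ 2 := hmin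
        _ ≤ ((1 - t) * H wag + t * H w) + c * ‖((1 - t) • wag + t • w) - v‖ ^ 2 := by
            simp only [smul_eq_mul] at hconv
            linarith [hconv]
    rw [hnorm] at this
    have ht : c * (t * (1 - t)) * ‖w - wag‖ ^ 2 ≤ t * (F w - F wag) := by
      simp only [hF]; nlinarith [this]
    have := (mul_le_mul_iff_right₀ ht0).mp (by nlinarith [ht] : t * (c * (1 - t) * ‖w - wag‖ ^ 2) ≤ t * (F w - F wag))
    exact this
  -- pass to the limit t → 0
  have hmain : c * ‖w - wag‖ ^ 2 ≤ F w - F wag := by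
    have hlim : Filter.Tendsto (fun t : ℝ => c * (1 - t) * ‖w - wag‖ ^ 2)
        (nhdsWithin 0 (Set.Ioo 0 1)) (nhds (c * (1 - 0) * ‖w - wag‖ ^ 2)) := by
      apply Filter.Tendsto.mono_left _ nhdsWithin_le_nhds
      exact (Continuous.tendsto (by continuity) 0)
    have hne : (nhdsWithin (0:ℝ) (Set.Ioo 0 1)).NeBot := by
      exact left_nhdsWithin_Ioo_neBot (by norm_num)
    have hev : ∀ᶠ t in nhdsWithin (0:ℝ) (Set.Ioo 0 1),
        c * (1 - t) * ‖w - wag‖ ^ 2 ≤ F w - F wag := by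
      filter_upwards [self_mem_nhdsWithin] with t ht
      exact hkey t ht.1 ht.2
    have := le_of_tendsto hlim hev
    simpa using this
  -- expand F
  have hwv : ‖w - v‖ ^ 2 = ‖w - wpr‖ ^ 2 + 2 * β * ⟪w - wpr, g⟫ + β ^ 2 * ‖g‖ ^ 2 := by
    have : w - v = (w - wpr) + β • g := by rw [hv]; abel
    rw [this, norm_add_sq_real, real_inner_smul_right, norm_smul, Real.norm_eq_abs,
      abs_of_pos hβ0, mul_pow]; ring
  have hwagv : ‖wag - v‖ ^ 2 = ‖wag - wpr‖ ^ 2 + 2 * β * ⟪wag - wpr, g⟫ + β ^ 2 * ‖g‖ ^ 2 := by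
    have : wag - v = (wag - wpr) + β • g := by rw [hv]; abel
    rw [this, norm_add_sq_real, real_inner_smul_right, norm_smul, Real.norm_eq_abs,
      abs_of_pos hβ0, mul_pow]; ring
  have hcb : c * (2 * β) = 1 := by rw [hc]; field_simp [hβ0.ne']
  have hinner : ⟪w - wpr, g⟫ - ⟪wag - wpr, g⟫ = ⟪w - wag, g⟫ := by
    rw [← inner_sub_left]
    congr 1
    abel
  have hFexp : F w - F wag = H w - H wag + c * (‖w - wpr‖ ^ 2 - ‖wag - wpr‖ ^ 2)
      + ⟪w - wag, g⟫ := by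
    simp only [hF]
    rw [hwv, hwagv, ← hinner, hc]
    field_simp
    ring
  rw [hFexp] at hmain
  clear_value F v g c
  clear hwag hF hv hFexp
  -- split g = G' + δ and handle δ term
  have hsplit : ⟪w - wag, g⟫ = ⟪w - wag, G'⟫ + ⟪w - wag, δ⟫ := by
    rw [hg]; exact inner_add_right _ _ _
  have hGsym : ⟪w - wag, G'⟫ = - ⟪G', wag - w⟫ := by
    rw [real_inner_comm, ← inner_neg_right]
    congr 1
    abel
  have hdelta : ⟪w - wag, δ⟫ ≤ 1 / 2 * ‖δ‖ ^ 2 + 1 / 2 * ‖w - wag‖ ^ 2 := by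
    have h1 : ⟪w - wag, δ⟫ ≤ ‖w - wag‖ * ‖δ‖ := real_inner_le_norm _ _
    nlinarith [sq_nonneg (‖w - wag‖ - ‖δ‖)]
  have hchalf : 1 / 2 ≤ c := by
    rw [hc]
    rw [div_le_div_iff₀ (by norm_num) (by positivity)]
    linarith
  have hnrev : ‖w - wpr‖ = ‖wpr - w‖ := norm_sub_rev _ _
  rw [hsplit, hGsym, hnrev] at hmain
  have hcc' : 1/2 * ‖w - wag‖ ^ 2 ≤ c * ‖w - wag‖ ^ 2 :=
    mul_le_mul_of_nonneg_right hchalf (sq_nonneg _)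
  linarith [hmain, hdelta, hcc']
end

section
/- Let E be a finite-dimensional real inner product space, let H : E → ℝ be convex, let G′, δ, w_{t−1} ∈ E, set g = G′ + δ, and let η > 0. Let w_t = prox_{ηH}(w_{t−1} − ηg), i.e., the unique minimizer of u ↦ H(u) + (1/(2η))‖u − (w_{t−1} − ηg)‖². Then for every w ∈ E: ⟪G′, w_t − w⟫ ≤ H(w) − H(w_t) + (1/(2η))(‖w_{t−1} − w‖² − ‖w_t − w‖² − ‖w_t − w_{t−1}‖²) + (1/2)‖δ‖² + (1/2)‖w_t − w‖². -/
open RealInnerProductSpace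

/-- Bound on the proximal step (first half of Lemma on proximal updates): with `g = G′ + δ`,
`η > 0`, and `w_t = prox_{ηH}(w_{t−1} − ηg)` for convex `H`, every `w` satisfies
`⟪G′, w_t − w⟫ ≤ H(w) − H(w_t) + (1/(2η))(‖w_{t−1} − w‖² − ‖w_t − w‖² − ‖w_t − w_{t−1}‖²)
  + (1/2)‖δ‖² + (1/2)‖w_t − w‖²`. -/
theorem stmt_11 {E : Type*} [NormedAddCommGroup E] [InnerProductSpace ℝ E]
    [FiniteDimensional ℝ E]
    (H : E → ℝ) (hH : ConvexOn ℝ Set.univ H)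
    (G' δ wprev : E) (η : ℝ) (hη : 0 < η)
    (wt : E)
    (hwt : IsMinOn
      (fun u : E => H u + 1 / (2 * η) * ‖u - (wprev - η • (G' + δ))‖ ^ 2) Set.univ wt) :
    ∀ w : E, ⟪G', wt - w⟫ ≤
      H w - H wt
        + 1 / (2 * η) * (‖wprev - w‖ ^ 2 - ‖wt - w‖ ^ 2 - ‖wt - wprev‖ ^ 2)
        + 1 / 2 * ‖δ‖ ^ 2 + 1 / 2 * ‖wt - w‖ ^ 2 := by
  intro w
  set v : E := wprev - η • (G' + δ) with hv
  set A : ℝ := (H w - H wt) + 1 / (2 * η) * (2 * ⟪wt - v, w - wt⟫) with hA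
  set B : ℝ := 1 / (2 * η) * ‖w - wt‖ ^ 2 with hBdef
  have key : ∀ t : ℝ, 0 < t → t ≤ 1 → 0 ≤ A + t * B := by
    intro t ht ht1
    have hmin := isMinOn_iff.mp hwt (wt + t • (w - wt)) (Set.mem_univ _)
    have hconv := hH.2 (Set.mem_univ wt) (Set.mem_univ w)
      (by linarith : (0:ℝ) ≤ 1 - t) (le_of_lt ht) (by ring)
    have hpt : (1 - t) • wt + t • w = wt + t • (w - wt) := by
      rw [smul_sub, sub_smul, one_smul]; abel
    rw [hpt] at hconv
    simp only [smul_eq_mul] at hconv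
    have hexp : ‖wt + t • (w - wt) - v‖ ^ 2
        = ‖wt - v‖ ^ 2 + 2 * (t * ⟪wt - v, w - wt⟫) + t ^ 2 * ‖w - wt‖ ^ 2 := by
      have h1 : wt + t • (w - wt) - v = (wt - v) + t • (w - wt) := by abel
      rw [h1, norm_add_sq_real, real_inner_smul_right, norm_smul, Real.norm_eq_abs,
        abs_of_pos ht]
      ring
    rw [hexp] at hmin
    have hc : 0 < 1 / (2 * η) := by positivity
    have h0 : 0 ≤ t * A + t ^ 2 * B := by
      simp only [hA, hBdef]
      nlinarith [hmin, hconv]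
    nlinarith [h0, ht, mul_pos ht ht]
  have hB0 : 0 ≤ B := by positivity
  have h2 : 0 ≤ A := by
    by_contra hcon
    push_neg at hcon
    rcases eq_or_lt_of_le hB0 with hB | hB
    · have := key 1 one_pos le_rfl
      nlinarith
    · have htpos : 0 < -A / (2 * B) := div_pos (by linarith) (by linarith)
      have := key (min 1 (-A / (2 * B))) (lt_min one_pos htpos) (min_le_left _ _)
      have hle : min 1 (-A / (2 * B)) ≤ -A / (2 * B) := min_le_right _ _
      have hmul : min 1 (-A / (2 * B)) * B ≤ (-A / (2 * B)) * B :=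
        mul_le_mul_of_nonneg_right hle hB0
      have : (-A / (2 * B)) * B = -A / 2 := by field_simp
      nlinarith
  -- expand inner product
  have hinner : ⟪wt - v, w - wt⟫ = ⟪wt - wprev, w - wt⟫ + η * ⟪G' + δ, w - wt⟫ := by
    have h1 : wt - v = (wt - wprev) + η • (G' + δ) := by rw [hv]; abel
    rw [h1, inner_add_left, real_inner_smul_left]
  -- three point identity
  have htp : ‖wprev - w‖ ^ 2 - ‖wt - w‖ ^ 2 - ‖wt - wprev‖ ^ 2
      = 2 * ⟪wt - wprev, w - wt⟫ := by
    have h1 : wprev - w = (wprev - wt) + (wt - w) := by abel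
    have h2 : ⟪wprev - wt, wt - w⟫ = ⟪wt - wprev, w - wt⟫ := by
      rw [← inner_neg_neg (𝕜 := ℝ)]; congr 1 <;> abel
    rw [h1, norm_add_sq_real, h2, norm_sub_rev wprev wt]
    ring
  -- from h2 and hinner, dividing the η factor through
  have h3 : ⟪G' + δ, wt - w⟫ ≤ H w - H wt
      + 1 / (2 * η) * (‖wprev - w‖ ^ 2 - ‖wt - w‖ ^ 2 - ‖wt - wprev‖ ^ 2) := by
    rw [htp]
    have hη' : η ≠ 0 := ne_of_gt hη
    have hswap : ⟪G' + δ, wt - w⟫ = - ⟪G' + δ, w - wt⟫ := by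
      rw [← inner_neg_right]; congr 1; abel
    rw [hA, hinner] at h2
    rw [hswap]
    have : 1 / (2 * η) * (2 * (η * ⟪G' + δ, w - wt⟫)) = ⟪G' + δ, w - wt⟫ := by
      field_simp
    nlinarith [h2]
  have hG : ⟪G', wt - w⟫ = ⟪G' + δ, wt - w⟫ - ⟪δ, wt - w⟫ := by
    rw [inner_add_left]; ring
  have hcs : ⟪δ, wt - w⟫ ≤ ‖δ‖ * ‖wt - w‖ := real_inner_le_norm δ (wt - w)
  have hcs2 : -⟪δ, wt - w⟫ ≤ ‖δ‖ * ‖wt - w‖ := by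
    have := real_inner_le_norm δ (w - wt)
    have hnorm : ‖w - wt‖ = ‖wt - w‖ := norm_sub_rev _ _
    have hneg : ⟪δ, w - wt⟫ = -⟪δ, wt - w⟫ := by
      rw [← inner_neg_right]; congr 1; abel
    linarith [hneg ▸ hnorm ▸ this]
  nlinarith [h3, hG, hcs2, sq_nonneg (‖δ‖ - ‖wt - w‖)]
end

section
/- Let E be a real inner product space, let C > 0, and let G : E → ℝ be differentiable with ∇G Lipschitz with constant C. Let α ∈ [0, 1], let w, w′, w^ag ∈ E, and set w^pr = α w′ + (1 − α) w^ag. Then G(w^pr) − [(1 − α)G(w^ag) + αG(w)] ≤ ⟪∇G(w^pr), w^pr − ((1 − α)w^ag + αw)⟫ + (C/2)(1 − α)α²‖w^ag − w′‖² + (Cα/2)‖w − w^pr‖². -/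
lemma descent_lower {E : Type*} [NormedAddCommGroup E] [InnerProductSpace ℝ E]
    (C : ℝ) (G : E → ℝ) (hGdiff : Differentiable ℝ G)
    (hGlip : ∀ x y : E, ‖fderiv ℝ G x - fderiv ℝ G y‖ ≤ C * ‖x - y‖)
    (x y : E) :
    G x + fderiv ℝ G x (y - x) - C / 2 * ‖y - x‖ ^ 2 ≤ G y := by
  set v := y - x with hv
  set φ : ℝ → ℝ := fun t => G (x + t • v) - t * (fderiv ℝ G x v) + C / 2 * t ^ 2 * ‖v‖ ^ 2
    with hφ
  have hline : ∀ t : ℝ, HasDerivAt (fun t : ℝ => x + t • v) v t := by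
    intro t
    simpa using ((hasDerivAt_id t).smul_const v).const_add x
  have hder : ∀ t : ℝ, HasDerivAt φ
      (fderiv ℝ G (x + t • v) v - fderiv ℝ G x v + C * t * ‖v‖ ^ 2) t := by
    intro t
    have h1 : HasDerivAt (fun t : ℝ => G (x + t • v)) (fderiv ℝ G (x + t • v) v) t :=
      (hGdiff (x + t • v)).hasFDerivAt.comp_hasDerivAt t (hline t)
    have h2 : HasDerivAt (fun t : ℝ => t * (fderiv ℝ G x v)) (fderiv ℝ G x v) t := by
      simpa using (hasDerivAt_id t).mul_const (fderiv ℝ G x v)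
    have h3 : HasDerivAt (fun t : ℝ => C / 2 * t ^ 2 * ‖v‖ ^ 2) (C * t * ‖v‖ ^ 2) t := by
      have := ((hasDerivAt_pow 2 t).const_mul (C / 2)).mul_const (‖v‖ ^ 2)
      refine this.congr_deriv ?_
      rw [show (2:ℕ) - 1 = 1 from rfl, pow_one]
      ring
    exact (h1.sub h2).add h3
  have hmono : MonotoneOn φ (Set.Icc (0:ℝ) 1) := by
    apply monotoneOn_of_deriv_nonneg (convex_Icc 0 1)
    · exact fun t _ => ((hder t).continuousAt).continuousWithinAt
    · intro t ht
      exact ((hder t).differentiableAt).differentiableWithinAt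
    · intro t ht
      rw [interior_Icc] at ht
      rw [(hder t).deriv]
      have hb : fderiv ℝ G x v - fderiv ℝ G (x + t • v) v ≤ C * t * ‖v‖ ^ 2 := by
        have h1 : fderiv ℝ G x v - fderiv ℝ G (x + t • v) v
            = (fderiv ℝ G x - fderiv ℝ G (x + t • v)) v := by simp
        have h2 : (fderiv ℝ G x - fderiv ℝ G (x + t • v)) v
            ≤ ‖fderiv ℝ G x - fderiv ℝ G (x + t • v)‖ * ‖v‖ :=
          le_trans (le_abs_self _) ((fderiv ℝ G x - fderiv ℝ G (x + t • v)).le_opNorm v)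
        have h3 : ‖fderiv ℝ G x - fderiv ℝ G (x + t • v)‖ ≤ C * (t * ‖v‖) := by
          have := hGlip x (x + t • v)
          simpa [norm_smul, abs_of_pos ht.1] using this
        calc fderiv ℝ G x v - fderiv ℝ G (x + t • v) v
            ≤ ‖fderiv ℝ G x - fderiv ℝ G (x + t • v)‖ * ‖v‖ := h1 ▸ h2
          _ ≤ C * (t * ‖v‖) * ‖v‖ := by
              apply mul_le_mul_of_nonneg_right h3 (norm_nonneg v)
          _ = C * t * ‖v‖ ^ 2 := by ring
      linarith
  have := hmono (Set.mem_Icc.mpr ⟨le_refl 0, zero_le_one⟩)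
    (Set.mem_Icc.mpr ⟨zero_le_one, le_refl 1⟩) zero_le_one
  simp only [hφ, zero_smul, add_zero, zero_mul, one_smul, one_mul, one_pow] at this
  have hxy : x + v = y := by rw [hv]; abel
  rw [hxy] at this
  linarith

/-- Descent-type inequality for a `C`-smooth function `G` at the extrapolated point
`w^pr = αw′ + (1−α)w^ag`:
`G(w^pr) − [(1−α)G(w^ag) + αG(w)] ≤ ⟪∇G(w^pr), w^pr − ((1−α)w^ag + αw)⟫
  + (C/2)(1−α)α²‖w^ag − w′‖² + (Cα/2)‖w − w^pr‖²`.
The inner product with the gradient is expressed via the Fréchet derivative. -/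
theorem stmt_16 {E : Type*} [NormedAddCommGroup E] [InnerProductSpace ℝ E]
    (C : ℝ) (hC : 0 < C)
    (G : E → ℝ) (hGdiff : Differentiable ℝ G)
    (hGlip : ∀ x y : E, ‖fderiv ℝ G x - fderiv ℝ G y‖ ≤ C * ‖x - y‖)
    (α : ℝ) (hα0 : 0 ≤ α) (hα1 : α ≤ 1)
    (w w' wag : E) (wpr : E) (hpr : wpr = α • w' + (1 - α) • wag) :
    G wpr - ((1 - α) * G wag + α * G w) ≤
      fderiv ℝ G wpr (wpr - ((1 - α) • wag + α • w))
        + C / 2 * (1 - α) * α ^ 2 * ‖wag - w'‖ ^ 2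
        + C * α / 2 * ‖w - wpr‖ ^ 2 := by
  have h1 := descent_lower C G hGdiff hGlip wpr wag
  have h2 := descent_lower C G hGdiff hGlip wpr w
  have hwag : wag - wpr = α • (wag - w') := by rw [hpr]; module
  have hn : ‖wag - wpr‖ ^ 2 = α ^ 2 * ‖wag - w'‖ ^ 2 := by
    rw [hwag, norm_smul, Real.norm_eq_abs, abs_of_nonneg hα0, mul_pow]
  have hlin : (1 - α) * fderiv ℝ G wpr (wag - wpr) + α * fderiv ℝ G wpr (w - wpr)
      = - fderiv ℝ G wpr (wpr - ((1 - α) • wag + α • w)) := by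
    have hms : ∀ (c : ℝ) (v : E), c * fderiv ℝ G wpr v = fderiv ℝ G wpr (c • v) :=
      fun c v => (map_smul (fderiv ℝ G wpr) c v).symm
    rw [hms, hms, ← map_add, ← map_neg]
    congr 1
    module
  rw [hn] at h1
  have h1' := mul_le_mul_of_nonneg_left h1 (by linarith : (0:ℝ) ≤ 1 - α)
  have h2' := mul_le_mul_of_nonneg_left h2 hα0
  nlinarith [h1', h2', hlin]
end
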